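/- The gradient of the ListNet loss with respect to the score vector has ℓ1 norm at most 2: for every s, y ∈ ℝ^m, ‖∇_s φ_LN(s,y)‖_1 ≤ 2. Consequently φ_LN(·,y) is 2-Lipschitz with respect to the ℓ∞ norm. -/

import Mathlib

open scoped BigOperators

/-- The softmax probability `P_j(v) = exp(v_j) / ∑_i exp(v_i)`. -/
noncomputable def softmaxP {m : ℕ} (j : Fin m) (v : Fin m → ℝ) : ℝ :=
  Real.exp (v j) / ∑ i, Real.exp (v i)

/-- The ListNet loss `φ_LN(s,y) = -∑_j P_j(y) log P_j(s)`. -/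
noncomputable def listNet {m : ℕ} (s y : Fin m → ℝ) : ℝ :=
  -∑ j, softmaxP j y * Real.log (softmaxP j s)

section aux

variable {m : ℕ}

lemma sum_exp_pos [Nonempty (Fin m)] (v : Fin m → ℝ) :
    0 < ∑ i, Real.exp (v i) :=
  Finset.sum_pos (fun _ _ => Real.exp_pos _) Finset.univ_nonempty

lemma softmaxP_nonneg (j : Fin m) (v : Fin m → ℝ) : 0 ≤ softmaxP j v := by
  rcases isEmpty_or_nonempty (Fin m) with h | h
  · exact h.elim j
  · exact div_nonneg (Real.exp_pos _).le (sum_exp_pos v).le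

lemma sum_softmaxP [Nonempty (Fin m)] (v : Fin m → ℝ) :
    ∑ j, softmaxP j v = 1 := by
  unfold softmaxP
  rw [← Finset.sum_div, div_self (sum_exp_pos v).ne']

lemma log_softmaxP [Nonempty (Fin m)] (j : Fin m) (v : Fin m → ℝ) :
    Real.log (softmaxP j v) = v j - Real.log (∑ i, Real.exp (v i)) := by
  unfold softmaxP
  rw [Real.log_div (Real.exp_ne_zero _) (sum_exp_pos v).ne', Real.log_exp]

lemma listNet_eq [Nonempty (Fin m)] (s y : Fin m → ℝ) :
    listNet s y = Real.log (∑ i, Real.exp (s i)) - ∑ j, softmaxP j y * s j := by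
  unfold listNet
  have : ∀ j : Fin m, softmaxP j y * Real.log (softmaxP j s)
      = softmaxP j y * s j - softmaxP j y * Real.log (∑ i, Real.exp (s i)) := by
    intro j; rw [log_softmaxP]; ring
  rw [Finset.sum_congr rfl (fun j _ => this j), Finset.sum_sub_distrib,
    ← Finset.sum_mul, sum_softmaxP]
  ring

end aux

/-- The gradient of the ListNet loss w.r.t. the score vector is
`(P_j(s) - P_j(y))_j`; it has ℓ1 norm at most 2, and consequently `φ_LN(·,y)`
is 2-Lipschitz w.r.t. the ℓ∞ norm. -/
theorem listNet_grad_l1_le_two {m : ℕ} (y : Fin m → ℝ) :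
    (∀ s : Fin m → ℝ,
      HasFDerivAt (fun t => listNet t y)
        (∑ j, (softmaxP j s - softmaxP j y) •
          (ContinuousLinearMap.proj (R := ℝ) (φ := fun _ : Fin m => ℝ) j)) s) ∧
    (∀ s : Fin m → ℝ, ∑ j, |softmaxP j s - softmaxP j y| ≤ 2) ∧
    (∀ s₁ s₂ : Fin m → ℝ,
      |listNet s₁ y - listNet s₂ y| ≤ 2 * ⨆ j, |s₁ j - s₂ j|) := by
  rcases isEmpty_or_nonempty (Fin m) with hE | hN
  · refine ⟨fun s => ?_, fun s => ?_, fun s₁ s₂ => ?_⟩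
    · have h1 : (fun t : Fin m → ℝ => listNet t y) = fun _ => (0 : ℝ) := by
        funext t; simp [listNet]
      have h2 : (∑ j, (softmaxP j s - softmaxP j y) •
          (ContinuousLinearMap.proj (R := ℝ) (φ := fun _ : Fin m => ℝ) j))
          = 0 := by simp
      rw [h1, h2]; exact hasFDerivAt_const _ _
    · simp
    · simp [listNet, Real.iSup_of_isEmpty]
  -- main case
  have grad : ∀ s : Fin m → ℝ,
      HasFDerivAt (fun t => listNet t y)
        (∑ j, (softmaxP j s - softmaxP j y) •
          (ContinuousLinearMap.proj (R := ℝ) (φ := fun _ : Fin m => ℝ) j)) s := by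
    intro s
    have hsum : HasFDerivAt (fun t : Fin m → ℝ => ∑ i, Real.exp (t i))
        (∑ i, Real.exp (s i) •
          (ContinuousLinearMap.proj (R := ℝ) (φ := fun _ : Fin m => ℝ) i)) s := by
      apply HasFDerivAt.fun_sum
      intro i _
      exact (Real.hasDerivAt_exp (s i)).comp_hasFDerivAt s
        ((ContinuousLinearMap.proj (R := ℝ) (φ := fun _ : Fin m => ℝ) i).hasFDerivAt)
    have hlog : HasFDerivAt (fun t : Fin m → ℝ => Real.log (∑ i, Real.exp (t i)))
        (∑ i, softmaxP i s •
          (ContinuousLinearMap.proj (R := ℝ) (φ := fun _ : Fin m => ℝ) i)) s := by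
      have := hsum.log (sum_exp_pos s).ne'
      refine this.congr_fderiv (Eq.symm ?_)
      rw [Finset.smul_sum]
      refine Finset.sum_congr rfl fun i _ => ?_
      rw [smul_smul, softmaxP, div_eq_inv_mul]
    have hlin : HasFDerivAt (fun t : Fin m → ℝ => ∑ j, softmaxP j y * t j)
        (∑ j, softmaxP j y •
          (ContinuousLinearMap.proj (R := ℝ) (φ := fun _ : Fin m => ℝ) j)) s := by
      apply HasFDerivAt.fun_sum
      intro j _
      exact ((ContinuousLinearMap.proj (R := ℝ)
        (φ := fun _ : Fin m => ℝ) j).hasFDerivAt).const_mul (softmaxP j y)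
    have hmain := hlog.sub hlin
    have heq : (fun t : Fin m → ℝ => listNet t y)
        = fun t => Real.log (∑ i, Real.exp (t i)) - ∑ j, softmaxP j y * t j := by
      funext t; exact listNet_eq t y
    rw [heq]
    refine hmain.congr_fderiv (Eq.symm ?_)
    rw [← Finset.sum_sub_distrib]
    exact Finset.sum_congr rfl fun j _ => (sub_smul _ _ _)
  have l1 : ∀ s : Fin m → ℝ, ∑ j, |softmaxP j s - softmaxP j y| ≤ 2 := by
    intro s
    calc ∑ j, |softmaxP j s - softmaxP j y|
        ≤ ∑ j, (softmaxP j s + softmaxP j y) := by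
          refine Finset.sum_le_sum fun j _ => ?_
          refine (abs_sub _ _).trans ?_
          rw [abs_of_nonneg (softmaxP_nonneg j s), abs_of_nonneg (softmaxP_nonneg j y)]
      _ = 2 := by rw [Finset.sum_add_distrib, sum_softmaxP, sum_softmaxP]; norm_num
  refine ⟨grad, l1, fun s₁ s₂ => ?_⟩
  have hbound : ∀ s : Fin m → ℝ,
      ‖∑ j, (softmaxP j s - softmaxP j y) •
        (ContinuousLinearMap.proj (R := ℝ) (φ := fun _ : Fin m => ℝ) j)‖ ≤ 2 := by
    intro s
    refine ContinuousLinearMap.opNorm_le_bound _ (by norm_num) fun x => ?_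
    have : (∑ j, (softmaxP j s - softmaxP j y) •
        (ContinuousLinearMap.proj (R := ℝ) (φ := fun _ : Fin m => ℝ) j)) x
        = ∑ j, (softmaxP j s - softmaxP j y) * x j := by
      simp [ContinuousLinearMap.sum_apply, smul_eq_mul]
    rw [this]
    calc ‖∑ j, (softmaxP j s - softmaxP j y) * x j‖
        ≤ ∑ j, |(softmaxP j s - softmaxP j y)| * |x j| := by
          simpa [abs_mul] using Finset.abs_sum_le_sum_abs
            (fun j => (softmaxP j s - softmaxP j y) * x j) Finset.univ
      _ ≤ ∑ j, |(softmaxP j s - softmaxP j y)| * ‖x‖ := by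
          refine Finset.sum_le_sum fun j _ => ?_
          exact mul_le_mul_of_nonneg_left (norm_le_pi_norm x j) (abs_nonneg _)
      _ = (∑ j, |(softmaxP j s - softmaxP j y)|) * ‖x‖ := by rw [Finset.sum_mul]
      _ ≤ 2 * ‖x‖ := mul_le_mul_of_nonneg_right (l1 s) (norm_nonneg _)
  have key : ‖listNet s₁ y - listNet s₂ y‖ ≤ 2 * ‖s₁ - s₂‖ := by
    refine Convex.norm_image_sub_le_of_norm_hasFDerivWithin_le
      (f := fun t => listNet t y) (s := Set.univ)
      (fun x _ => (grad x).hasFDerivWithinAt) (fun x _ => hbound x)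
      convex_univ (Set.mem_univ s₂) (Set.mem_univ s₁)
  have hnorm : ‖s₁ - s₂‖ ≤ ⨆ j, |s₁ j - s₂ j| := by
    have hb : BddAbove (Set.range fun j => |s₁ j - s₂ j|) :=
      Set.Finite.bddAbove (Set.finite_range _)
    refine (pi_norm_le_iff_of_nonneg ?_).2 fun i => ?_
    · exact le_ciSup_of_le hb (Classical.arbitrary _) (abs_nonneg _)
    · simpa [Real.norm_eq_abs] using le_ciSup hb i
  calc |listNet s₁ y - listNet s₂ y| ≤ 2 * ‖s₁ - s₂‖ := key
    _ ≤ 2 * ⨆ j, |s₁ j - s₂ j| := by linarith
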